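/- In the setting of the chain-based null distance: let X be a set, R a relation on X, τ : X → ℝ, and d a metric on X. Suppose the anti-Lipschitz condition holds: for all (p,q) ∈ R, τ(q) − τ(p) ≥ d(p,q). Then for all p, q ∈ X (joined by at least one R-chain), d̂_τ(p,q) ≥ d(p,q). In particular, d̂_τ is a definite metric: d̂_τ(p,q) = 0 implies p = q. -/

import Mathlib

variable {X : Type*}

/-- The set of null lengths of `R`-chains from `p` to `q`: finite sequences
`x 0 = p, …, x m = q` with `m ≥ 1` whose consecutive points are related by `R`
in one direction or the other, with length `∑ |τ(x_{i+1}) - τ(x_i)|`. -/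
def chainLengths (R : X → X → Prop) (τ : X → ℝ) (p q : X) : Set ℝ :=
  {L | ∃ m : ℕ, ∃ x : Fin (m + 1) → X, 0 < m ∧ x 0 = p ∧ x (Fin.last m) = q ∧
    (∀ i : Fin m, R (x i.castSucc) (x i.succ) ∨ R (x i.succ) (x i.castSucc)) ∧
    L = ∑ i : Fin m, |τ (x i.succ) - τ (x i.castSucc)|}

/-- The chain-based null distance of Sormani–Vega. -/
noncomputable def nullDist (R : X → X → Prop) (τ : X → ℝ) (p q : X) : ℝ :=
  sInf (chainLengths R τ p q)

private lemma chain_dist_le [MetricSpace X] (τ : X → ℝ) :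
    ∀ (m : ℕ) (x : Fin (m + 1) → X),
      (∀ i : Fin m, dist (x i.castSucc) (x i.succ) ≤ |τ (x i.succ) - τ (x i.castSucc)|) →
      dist (x 0) (x (Fin.last m)) ≤ ∑ i : Fin m, |τ (x i.succ) - τ (x i.castSucc)| := by
  intro m
  induction m with
  | zero => intro x _; simp [Fin.last]
  | succ m ih =>
    intro x hx
    rw [Fin.sum_univ_castSucc]
    have h1 := ih (fun i => x i.castSucc) (fun i => by
      have h := hx i.castSucc; rw [Fin.succ_castSucc] at h; exact h)
    calc dist (x 0) (x (Fin.last (m + 1)))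
        ≤ dist (x 0) (x (Fin.last m).castSucc) + dist (x (Fin.last m).castSucc) (x (Fin.last (m+1))) :=
          dist_triangle _ _ _
      _ ≤ (∑ i : Fin m, |τ (x i.succ.castSucc) - τ (x i.castSucc.castSucc)|)
            + |τ (x (Fin.last m).succ) - τ (x (Fin.last m).castSucc)| := by
          have h2 := hx (Fin.last m)
          have : (Fin.last m).succ = Fin.last (m + 1) := rfl
          rw [this] at h2
          exact add_le_add (by rw [Fin.castSucc_zero] at h1; exact h1) h2
      _ = _ := by congr 1

/-- If `τ` is anti-Lipschitz along `R` with respect to a metric `d`, then the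
null distance dominates `d`; in particular it is definite. -/
theorem nullDist_ge_dist_of_antiLipschitz
    [MetricSpace X] (R : X → X → Prop) (τ : X → ℝ)
    (hne : ∀ p q : X, (chainLengths R τ p q).Nonempty)
    (hanti : ∀ p q : X, R p q → dist p q ≤ τ q - τ p) :
    (∀ p q : X, dist p q ≤ nullDist R τ p q) ∧
    (∀ p q : X, nullDist R τ p q = 0 → p = q) := by
  have key : ∀ p q : X, dist p q ≤ nullDist R τ p q := by
    intro p q
    apply le_csInf (hne p q)
    rintro L ⟨m, x, _, hx0, hxl, hR, rfl⟩
    have hstep : ∀ i : Fin m,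
        dist (x i.castSucc) (x i.succ) ≤ |τ (x i.succ) - τ (x i.castSucc)| := by
      intro i
      rcases hR i with h | h
      · exact (hanti _ _ h).trans (le_abs_self _)
      · calc dist (x i.castSucc) (x i.succ) = dist (x i.succ) (x i.castSucc) := dist_comm _ _
          _ ≤ τ (x i.castSucc) - τ (x i.succ) := hanti _ _ h
          _ ≤ |τ (x i.succ) - τ (x i.castSucc)| := by rw [abs_sub_comm]; exact le_abs_self _
    have := chain_dist_le τ m x hstep
    rwa [hx0, hxl] at this
  refine ⟨key, fun p q h0 => ?_⟩
  have := key p q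
  rw [h0] at this
  exact dist_le_zero.mp this
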